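/- Let E = (E⁰, E¹, r, s) be a finite directed graph and ω : E¹ → ℤ a weight function such that for every cycle w¹w²…wⁿ in E (meaning r(wⁱ) = s(w^{i+1}) for 1 ≤ i < n and r(wⁿ) = s(w¹)), the total weight Σ_{i=1}^{n} ω(wⁱ) is nonnegative. Then there exists κ : E⁰ → ℤ such that ω(w) + κ(s(w)) − κ(r(w)) ≥ 0 for every edge w ∈ E¹. -/

import Mathlib

namespace BH16

variable {V E : Type*}

def IsChain (r s : E → V) (l : List E) : Prop := l.Chain' (fun a b => r a = s b)
def EndAt (r : E → V) (l : List E) (v : V) : Prop := ∀ a ∈ l.getLast?, r a = v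
def wt (ω : E → ℤ) (l : List E) : ℤ := (l.map ω).sum

theorem getLast_eq_of_eq {l m : List E} (h : l = m) (hl : l ≠ []) :
    l.getLast hl = m.getLast (h ▸ hl) := by subst h; rfl

theorem getElem_idx (l : List E) {a b : ℕ} (ha : a < l.length) (h : a = b) :
    l[a]'ha = l[b]'(h ▸ ha) := by subst h; rfl

theorem endAt_iff {r : E → V} {l : List E} {v : V} :
    EndAt r l v ↔ ∀ h : l ≠ [], r (l.getLast h) = v := by
  rcases eq_or_ne l [] with h | h
  · subst h; simp [EndAt]
  · rw [EndAt, List.getLast?_eq_getLast h]; simp [h]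

theorem wt_append (ω : E → ℤ) (a b : List E) : wt ω (a ++ b) = wt ω a + wt ω b := by
  simp [wt]

theorem shorten [Fintype V] {r s : E → V} {ω : E → ℤ}
    (hcyclist : ∀ l : List E, l ≠ [] → IsChain r s l →
      (∀ a ∈ l.getLast?, ∀ b ∈ l.head?, r a = s b) → 0 ≤ wt ω l)
    (v : V) : ∀ l : List E, IsChain r s l → EndAt r l v →
      ∃ l', IsChain r s l' ∧ EndAt r l' v ∧ l'.length ≤ Fintype.card V ∧ wt ω l' ≤ wt ω l := by
  suffices H : ∀ L : ℕ, ∀ l : List E, l.length = L → IsChain r s l → EndAt r l v →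
      ∃ l', IsChain r s l' ∧ EndAt r l' v ∧ l'.length ≤ Fintype.card V ∧ wt ω l' ≤ wt ω l by
    intro l; exact H l.length l rfl
  intro L
  induction L using Nat.strong_induction_on with
  | _ L IH =>
  intro l hL hch hend
  by_cases hle : l.length ≤ Fintype.card V
  · exact ⟨l, hch, hend, hle, le_refl _⟩
  push_neg at hle
  have hLpos : 0 < L := by omega
  have hne : l ≠ [] := by intro h0; rw [h0] at hL; simp at hL; omega
  -- vertex sequence along the walk
  set f : ℕ → V := fun k => if h : k < l.length then s (l[k]'h) else v with hf
  have hfval : ∀ k (h : k < l.length), f k = s (l[k]'h) := by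
    intro k h; simp [hf, h]
  have hfL : ∀ k, l.length ≤ k → f k = v := by
    intro k h; simp [hf]; omega
  have hR : ∀ k (h : k < l.length), r (l[k]'h) = f (k + 1) := by
    intro k h
    by_cases h' : k + 1 < l.length
    · rw [hfval _ h']
      exact List.isChain_iff_getElem.mp hch k (by omega)
    · rw [hfL _ (by omega)]
      have hlst : l.getLast hne = l[k]'h := by
        rw [List.getLast_eq_getElem]; exact (getElem_idx l h (by omega)).symm
      rw [← hlst]; exact endAt_iff.mp hend hne
  -- pigeonhole
  obtain ⟨i, j, hij, hfij⟩ : ∃ i j : Fin (L + 1), i < j ∧ f i = f j := by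
    obtain ⟨i, j, hne', hfe⟩ := Fintype.exists_ne_map_eq_of_card_lt
      (fun k : Fin (L + 1) => f k) (by simp; omega)
    rcases lt_or_gt_of_ne hne' with h | h
    · exact ⟨i, j, h, hfe⟩
    · exact ⟨j, i, h, hfe.symm⟩
  have hij' : (i : ℕ) < (j : ℕ) := hij
  have hiL : (i : ℕ) < L := lt_of_lt_of_le hij' (Nat.lt_succ_iff.mp j.isLt)
  have hjL : (j : ℕ) ≤ L := Nat.lt_succ_iff.mp j.isLt
  set cy : List E := (l.drop i).take (j - i) with hcy
  set l₂ : List E := l.take i ++ l.drop j with hl₂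
  have hlenc : cy.length = (j : ℕ) - i := by simp [hcy, hL]; omega
  have hlen₂ : l₂.length = (i : ℕ) + (L - j) := by simp [hl₂, hL]; omega
  have hgc : ∀ k (h : k < cy.length), cy[k]'h = l[(i:ℕ) + k]'(by
      rw [hlenc] at h; omega) := by
    intro k h
    simp only [hcy, List.getElem_take, List.getElem_drop]
  -- cy is a nonnegative cycle
  have hcne : cy ≠ [] := by
    intro h0; rw [h0] at hlenc; simp at hlenc; omega
  have hwc : 0 ≤ wt ω cy := by
    apply hcyclist cy hcne ((hch.drop _).take _)
    rw [List.getLast?_eq_getLast hcne, List.head?_eq_head hcne]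
    intro a ha b hb
    simp only [Option.mem_def, Option.some.injEq] at ha hb
    subst ha; subst hb
    have hlast : cy.getLast hcne = l[(j:ℕ) - 1]'(by omega) := by
      rw [List.getLast_eq_getElem, hgc]
      exact getElem_idx l _ (by rw [hlenc]; omega)
    have hhead : cy.head hcne = l[(i:ℕ)]'(by omega) := by
      rw [List.head_eq_getElem, hgc]
      exact getElem_idx l _ (by omega)
    rw [hlast, hhead, hR, ← hfval _ (by omega : (i:ℕ) < l.length)]
    rw [show (j:ℕ) - 1 + 1 = (j:ℕ) from by omega]
    exact hfij.symm
  -- l₂ is a chain ending at v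
  have hch₂ : IsChain r s l₂ := by
    rw [hl₂, IsChain, List.Chain', List.isChain_append]
    refine ⟨hch.take _, hch.drop _, ?_⟩
    intro a ha b hb
    have hi0 : (i : ℕ) ≠ 0 := by
      intro h0
      rw [h0] at ha; simp at ha
    have hjL' : (j : ℕ) < L := by
      by_contra h0
      rw [List.drop_eq_nil_of_le (by omega)] at hb; simp at hb
    have hta : (l.take (i:ℕ)) ≠ [] := by
      intro h0
      have := congrArg List.length h0; simp only [List.length_take, List.length_nil, hL] at this; omega
    rw [List.getLast?_eq_getLast hta, Option.mem_def, Option.some.injEq] at ha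
    have hdb : (l.drop (j:ℕ)) ≠ [] := by
      intro h0
      have := congrArg List.length h0; simp [hL] at this; omega
    rw [List.head?_eq_head hdb, Option.mem_def, Option.some.injEq] at hb
    subst ha; subst hb
    have e1 : (l.take (i:ℕ)).getLast hta = l[(i:ℕ) - 1]'(by omega) := by
      rw [List.getLast_eq_getElem, List.getElem_take]
      exact getElem_idx l _ (by simp [hL]; omega)
    have e2 : (l.drop (j:ℕ)).head hdb = l[(j:ℕ)]'(by omega) := by
      rw [List.head_eq_getElem, List.getElem_drop]
      exact getElem_idx l _ (by omega)
    rw [e1, e2, hR, ← hfval _ (by omega : (j:ℕ) < l.length), ← hfij]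
    congr 1
    omega
  have hend₂ : EndAt r l₂ v := by
    rw [endAt_iff]
    intro hne₂
    by_cases hjL' : (j : ℕ) < L
    · have hdb : (l.drop (j:ℕ)) ≠ [] := by
        intro h0
        have := congrArg List.length h0; simp [hL] at this; omega
      have e0 : l₂.getLast hne₂ = (l.drop (j:ℕ)).getLast hdb := by
        rw [getLast_eq_of_eq hl₂ hne₂]; exact List.getLast_append_of_ne_nil _ hdb
      have e1 : (l.drop (j:ℕ)).getLast hdb = l[l.length - 1]'(by omega) := by
        rw [List.getLast_eq_getElem, List.getElem_drop]
        exact getElem_idx l _ (by simp [hL]; omega)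
      rw [e0, e1]
      have := endAt_iff.mp hend hne
      rwa [List.getLast_eq_getElem] at this
    · have hje : (j : ℕ) = L := by omega
      have hl₂' : l₂ = l.take (i:ℕ) := by
        rw [hl₂, List.drop_eq_nil_of_le (by omega), List.append_nil]
      have hi0 : (i : ℕ) ≠ 0 := by
        intro h0
        rw [hl₂', h0] at hne₂; simp at hne₂
      have hta : (l.take (i:ℕ)) ≠ [] := hl₂' ▸ hne₂
      have e1 : l₂.getLast hne₂ = l[(i:ℕ) - 1]'(by omega) := by
        rw [getLast_eq_of_eq hl₂' hne₂, List.getLast_eq_getElem, List.getElem_take]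
        exact getElem_idx l _ (by simp [hL]; omega)
      rw [e1, hR]
      rw [show (i:ℕ) - 1 + 1 = (i:ℕ) from by omega]
      rw [hfij, hfL _ (by omega)]
  -- weight decomposition
  have hsplit : wt ω l = wt ω l₂ + wt ω cy := by
    have h1 : l = l.take (i:ℕ) ++ (cy ++ l.drop (j:ℕ)) := by
      rw [hcy]
      nth_rewrite 1 [← List.take_append_drop (i:ℕ) l]
      congr 1
      nth_rewrite 1 [← List.take_append_drop ((j:ℕ) - i) (l.drop (i:ℕ))]
      rw [List.drop_drop]
      congr 2
      omega
    nth_rewrite 1 [h1]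
    rw [hl₂, wt_append, wt_append, wt_append]
    ring
  have hlen₂' : l₂.length < L := by omega
  obtain ⟨l', h1, h2, h3, h4⟩ := IH l₂.length hlen₂' l₂ rfl hch₂ hend₂
  exact ⟨l', h1, h2, h3, by omega⟩

theorem cycle_nonneg [Fintype V] [Fintype E] {r s : E → V} {ω : E → ℤ}
    (hcyc : ∀ n : ℕ, ∀ w : Fin (n + 1) → E,
      (∀ i : Fin (n + 1), r (w i) = s (w (i + 1))) → 0 ≤ ∑ i, ω (w i))
    (l : List E) (hne : l ≠ []) (hch : IsChain r s l)
    (hcl : ∀ a ∈ l.getLast?, ∀ b ∈ l.head?, r a = s b) : 0 ≤ wt ω l := by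
  obtain ⟨n, hn⟩ : ∃ n, l.length = n + 1 :=
    ⟨l.length - 1, (Nat.succ_pred_eq_of_pos (List.length_pos_iff.mpr hne)).symm⟩
  set w : Fin (n+1) → E := fun i => l.get (Fin.cast hn.symm i) with hw
  have hsum : wt ω l = ∑ i, ω (w i) := by
    rw [wt, ← List.ofFn_getElem_eq_map, List.sum_ofFn]
    exact Finset.sum_equiv (finCongr hn) (by simp) (by intro i _; simp [hw, finCongr])
  rw [hsum]
  apply hcyc
  intro i
  rcases lt_or_eq_of_le (Nat.lt_succ_iff.mp i.isLt) with hi | hi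
  · -- interior step
    have := List.isChain_iff_getElem.mp hch i.1 (by omega)
    have hadd : ((i + 1 : Fin (n+1)) : ℕ) = i.1 + 1 :=
      Fin.val_add_one_of_lt (by rw [Fin.lt_iff_val_lt_val]; simpa using hi)
    simpa [hw, List.get_eq_getElem, hadd] using this
  · -- wrap-around
    have hlast : l.getLast hne = l.get (Fin.cast hn.symm i) := by
      rw [List.getLast_eq_getElem]
      simp [hn, hi]
    have hhead : l.head hne = l.get (Fin.cast hn.symm (i + 1)) := by
      have : ((i + 1 : Fin (n+1)) : ℕ) = 0 := by
        have : i = Fin.last n := by ext; simpa using hi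
        subst this; simp
      rw [List.head_eq_getElem]
      simp [this]
    have := hcl (l.getLast hne) (List.getLast?_eq_getLast hne ▸ rfl)
      (l.head hne) (List.head?_eq_head hne ▸ rfl)
    simpa [hw, hlast, hhead] using this


end BH16

/-- Boyle–Handelman: if `ω : E¹ → ℤ` is a weight on the edges of a finite
directed graph whose total weight around every cycle is nonnegative, then there
is a potential `κ : E⁰ → ℤ` with `ω(w) + κ(s(w)) - κ(r(w)) ≥ 0` for every
edge `w`. A cycle of length `n + 1` is a tuple `w : Fin (n+1) → E` with
`r(wⁱ) = s(w^{i+1})` cyclically. -/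
theorem stmt16 {V E : Type*} [Fintype V] [Fintype E]
    (r s : E → V) (ω : E → ℤ)
    (hcyc : ∀ n : ℕ, ∀ w : Fin (n + 1) → E,
      (∀ i : Fin (n + 1), r (w i) = s (w (i + 1))) → 0 ≤ ∑ i, ω (w i)) :
    ∃ κ : V → ℤ, ∀ e : E, 0 ≤ ω e + κ (s e) - κ (r e) := by
  classical
  have hcyclist : ∀ l : List E, l ≠ [] → BH16.IsChain r s l →
      (∀ a ∈ l.getLast?, ∀ b ∈ l.head?, r a = s b) → 0 ≤ BH16.wt ω l :=
    fun l h1 h2 h3 => BH16.cycle_nonneg hcyc l h1 h2 h3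
  set M : ℤ := ∑ e : E, |ω e| with hMdef
  have hM0 : 0 ≤ M := Finset.sum_nonneg fun e _ => abs_nonneg _
  have hM : ∀ e : E, -M ≤ ω e := by
    intro e
    have h1 : |ω e| ≤ M := Finset.single_le_sum (fun e' _ => abs_nonneg (ω e'))
      (Finset.mem_univ e)
    have := neg_abs_le (ω e)
    omega
  have hwtlb : ∀ l : List E, -((l.length : ℤ) * M) ≤ BH16.wt ω l := by
    intro l
    induction l with
    | nil => simp [BH16.wt]
    | cons a t ih =>
      have h1 : BH16.wt ω (a :: t) = ω a + BH16.wt ω t := by simp [BH16.wt]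
      have h2 := hM a
      rw [h1]
      simp only [List.length_cons]
      push_cast
      push_cast at ih
      nlinarith [ih, h2]
  set N : ℕ := Fintype.card V with hNdef
  set P : V → ℤ → Prop := fun v x => ∃ l : List E,
    BH16.IsChain r s l ∧ BH16.EndAt r l v ∧ BH16.wt ω l = x with hP
  have hbdd : ∀ v : V, ∀ x : ℤ, P v x → -((N : ℤ) * M) ≤ x := by
    rintro v x ⟨l, hch, hend, rfl⟩
    obtain ⟨l', h1, h2, h3, h4⟩ := BH16.shorten hcyclist v l hch hend
    have h5 := hwtlb l'
    have h6 : (l'.length : ℤ) * M ≤ (N : ℤ) * M := by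
      apply mul_le_mul_of_nonneg_right _ hM0
      exact_mod_cast h3
    omega
  have hex : ∀ v : V, ∃ x : ℤ, P v x := by
    intro v
    exact ⟨0, [], List.isChain_nil, by intro a ha; simp at ha, rfl⟩
  have hmin : ∀ v : V, ∃ k : ℤ, P v k ∧ ∀ x : ℤ, P v x → k ≤ x := by
    intro v
    exact Int.exists_least_of_bdd ⟨-((N : ℤ) * M), hbdd v⟩ (hex v)
  choose κ hκmem hκmin using hmin
  refine ⟨κ, fun e => ?_⟩
  obtain ⟨l, hch, hend, hwl⟩ := hκmem (s e)
  have hP' : P (r e) (κ (s e) + ω e) := by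
    refine ⟨l ++ [e], ?_, ?_, ?_⟩
    · rw [BH16.IsChain, List.Chain', List.isChain_append]
      refine ⟨hch, List.isChain_singleton e, ?_⟩
      intro a ha b hb
      simp only [List.head?_cons, Option.mem_def, Option.some.injEq] at hb
      subst hb
      exact hend a ha
    · intro a ha
      rw [List.getLast?_append_cons] at ha
      simp at ha
      subst ha; rfl
    · rw [BH16.wt_append, hwl]
      simp [BH16.wt]
  have := hκmin (r e) _ hP'
  omega
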